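/- Let (P_i : i ∈ I) be a family of partial orders such that for every finite set s ⊆ I the product ∏_{i∈s} P_i (ordered coordinatewise) has the countable chain condition. Then the finite support product of (P_i : i ∈ I) — whose conditions are functions p defined on a finite subset of I with p(i) ∈ P_i, ordered by q ≤ p iff dom(p) ⊆ dom(q) and q(i) ≤ p(i) for all i ∈ dom(p) — has the countable chain condition. -/

import Mathlib

noncomputable section

/-- The first uncountable ordinal `ω₁`. -/
def omega1 : Ordinal.{0} := (Cardinal.aleph 1).ord

/-- A club (closed unbounded) subset of `ω₁`. -/
def IsClubSet (C : Set Ordinal) : Prop :=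
  C ⊆ Set.Iio omega1 ∧
  (∀ β < omega1, ∃ γ ∈ C, β ≤ γ) ∧
  (∀ α < omega1, Order.IsSuccLimit α → (∀ β < α, ∃ γ ∈ C, β ≤ γ ∧ γ < α) → α ∈ C)

/-- A stationary subset of `ω₁`: one meeting every club. -/
def IsStationaryIn (S : Set Ordinal) : Prop :=
  S ⊆ Set.Iio omega1 ∧ ∀ C : Set Ordinal, IsClubSet C → (S ∩ C).Nonempty

/-- The diamond principle `♦`. -/
def DiamondPrinciple : Prop :=
  ∃ a : Ordinal → Set Ordinal,
    (∀ α, α < omega1 → a α ⊆ Set.Iio α) ∧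
    ∀ A : Set Ordinal, A ⊆ Set.Iio omega1 →
      IsStationaryIn {α | α < omega1 ∧ A ∩ Set.Iio α = a α}

open Classical in
/-- The level of a node of a tree: the order type of its set of strict
predecessors (defaulting to `0` when that set is not well-ordered). -/
noncomputable def levelOf {β : Type} [Preorder β] (x : β) : Ordinal :=
  if h : IsWellOrder {y : β // y < x} (· < ·) then
    @Ordinal.type {y : β // y < x} (· < ·) h
  else 0

/-- A tree order: the strict predecessors of every node are well-ordered. -/
def IsTreeOrder (β : Type) [Preorder β] : Prop :=
  ∀ x : β, IsWellOrder {y : β // y < x} (· < ·)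

/-- The height of a tree: the supremum of the successors of the levels of its nodes. -/
noncomputable def heightOf (β : Type) [Preorder β] : Ordinal :=
  ⨆ x : β, (levelOf x + 1)

/-- A Suslin tree: a tree of height `ω₁` all of whose chains and antichains
(in the tree sense: sets of pairwise incomparable nodes) are countable. -/
def IsSuslinTree (β : Type) [PartialOrder β] : Prop :=
  IsTreeOrder β ∧ heightOf β = omega1 ∧
  (∀ C : Set β, IsChain (· ≤ ·) C → C.Countable) ∧
  (∀ A : Set β, (A.Pairwise fun x y => ¬ x ≤ y ∧ ¬ y ≤ x) → A.Countable)

/-- Compatibility (forcing sense): a common lower bound exists. -/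
def Compat {P : Type*} [Preorder P] (p q : P) : Prop := ∃ r, r ≤ p ∧ r ≤ q

/-- The countable chain condition: every set of pairwise incompatible elements is countable. -/
def CCC (P : Type*) [Preorder P] : Prop :=
  ∀ A : Set P, (A.Pairwise fun p q => ¬ Compat p q) → A.Countable

/-- Compatibility in the upward sense: a common upper bound exists. -/
def UpCompat {P : Type*} [Preorder P] (p q : P) : Prop := ∃ r, p ≤ r ∧ q ≤ r

/-- The countable chain condition with compatibility read as the existence of
common upper bounds. -/
def CCCUp (P : Type*) [Preorder P] : Prop :=
  ∀ A : Set P, (A.Pairwise fun p q => ¬ UpCompat p q) → A.Countable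

/-- The Knaster property. -/
def Knaster (P : Type*) [Preorder P] : Prop :=
  ∀ A : Set P, ¬ A.Countable → ∃ B ⊆ A, ¬ B.Countable ∧ B.Pairwise Compat

/-- A bundled partial order. -/
structure PoCarrier : Type 1 where
  carrier : Type
  po : PartialOrder carrier

attribute [instance] PoCarrier.po

/-- The finite support product of a family `(P i : i ∈ I)` of partial orders:
conditions are functions defined on a finite subset of `I` (represented as
finitely-supported `Option`-valued functions) with `p i ∈ P i` on the domain. -/
def FinSupportProd (I : Type*) (P : I → Type*) :=
  {f : ∀ i, Option (P i) // {i | f i ≠ none}.Finite}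

/-- `q ≤ p` iff `dom p ⊆ dom q` and `q i ≤ p i` for every `i ∈ dom p`. -/
instance {I : Type*} {P : I → Type*} [∀ i, PartialOrder (P i)] :
    PartialOrder (FinSupportProd I P) where
  le q p := ∀ i x, p.1 i = some x → ∃ y, q.1 i = some y ∧ y ≤ x
  le_refl p i x h := ⟨x, h, le_rfl⟩
  le_trans a b c hab hbc i x hcx := by
    obtain ⟨y, hby, hyx⟩ := hbc i x hcx
    obtain ⟨z, haz, hzy⟩ := hab i y hby
    exact ⟨z, haz, hzy.trans hyx⟩
  le_antisymm a b hab hba := by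
    apply Subtype.ext
    funext i
    cases hbi : b.1 i with
    | none =>
      cases hai : a.1 i with
      | none => rfl
      | some z =>
        obtain ⟨w, hbw, -⟩ := hba i z hai
        rw [hbi] at hbw; exact absurd hbw (by simp)
    | some x =>
      obtain ⟨y, hay, hyx⟩ := hab i x hbi
      obtain ⟨z, hbz, hzy⟩ := hba i y hay
      rw [hbi] at hbz
      obtain rfl : x = z := by injection hbz
      rw [hay, le_antisymm hyx hzy]
open Classical in
theorem myDeltaSystem {α β : Type*} : ∀ (n : ℕ) (S : Set α) (f : α → Finset β),
    ¬ S.Countable → (∀ a ∈ S, (f a).card ≤ n) →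
    ∃ T ⊆ S, ¬ T.Countable ∧ ∃ r : Finset β,
      ∀ a ∈ T, ∀ b ∈ T, a ≠ b → f a ∩ f b = r := by
  intro n
  induction n with
  | zero =>
    intro S f hS hcard
    refine ⟨S, subset_rfl, hS, ∅, fun a ha b hb _ => ?_⟩
    have : f a = ∅ := Finset.card_eq_zero.mp (Nat.le_zero.mp (hcard a ha))
    simp [this]
  | succ n ih =>
    intro S f hS hcard
    by_cases hx : ∃ x, ¬ {a ∈ S | x ∈ f a}.Countable
    · obtain ⟨x, hx⟩ := hx
      have hcard' : ∀ a ∈ {a ∈ S | x ∈ f a}, ((fun a => f a \ {x}) a).card ≤ n := by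
        intro a ha
        have h1 := hcard a ha.1
        have h2 : (f a \ {x}).card = (f a).card - 1 := by
          rw [Finset.card_sdiff_of_subset (by simpa using ha.2)]; simp
        show (f a \ {x}).card ≤ n
        omega
      obtain ⟨T, hTsub, hTunc, r, hr⟩ := ih {a ∈ S | x ∈ f a} (fun a => f a \ {x}) hx hcard'
      refine ⟨T, fun a ha => (hTsub ha).1, hTunc, insert x r, ?_⟩
      intro a ha b hb hab
      have hxa : x ∈ f a := (hTsub ha).2
      have hxb : x ∈ f b := (hTsub hb).2
      have h2 := hr a ha b hb hab
      ext y
      by_cases hy : y = x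
      · subst hy; simp [hxa, hxb]
      · have h3 : y ∈ (f a \ {x}) ∩ (f b \ {x}) ↔ y ∈ r := by rw [h2]
        simp only [Finset.mem_inter, Finset.mem_sdiff, Finset.mem_singleton, hy,
          not_false_iff, and_true] at h3
        simp only [Finset.mem_inter, Finset.mem_insert, hy, false_or]
        exact h3
    · push_neg at hx
      have hz : ∀ c ⊆ {T | T ⊆ S ∧ T.Pairwise fun a b => Disjoint (f a) (f b)},
          IsChain (· ⊆ ·) c → ∃ ub ∈ {T | T ⊆ S ∧ T.Pairwise fun a b => Disjoint (f a) (f b)},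
            ∀ s ∈ c, s ⊆ ub := by
        intro c hcS hchain
        refine ⟨⋃₀ c, ⟨Set.sUnion_subset fun t ht => (hcS ht).1, ?_⟩,
          fun s hs => Set.subset_sUnion_of_mem hs⟩
        intro a ha b hb hab
        obtain ⟨ta, hta, haa⟩ := ha
        obtain ⟨tb, htb, hbb⟩ := hb
        rcases hchain.total hta htb with hle | hle
        · exact (hcS htb).2 (hle haa) hbb hab
        · exact (hcS hta).2 haa (hle hbb) hab
      obtain ⟨T, hT⟩ := zorn_subset {T | T ⊆ S ∧ T.Pairwise fun a b => Disjoint (f a) (f b)} hz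
      obtain ⟨hTS, hTp⟩ := hT.prop
      refine ⟨T, hTS, ?_, ∅, fun a ha b hb hab => Finset.disjoint_iff_inter_eq_empty.mp (hTp ha hb hab)⟩
      intro hTc
      have hU : (⋃ a ∈ T, (f a : Set β)).Countable :=
        hTc.biUnion fun a _ => (f a).countable_toSet
      have hScov : S ⊆ T ∪ ⋃ x ∈ ⋃ a ∈ T, (f a : Set β), {a ∈ S | x ∈ f a} := by
        intro s hs
        by_cases hsT : s ∈ T
        · exact Or.inl hsT
        by_cases hdis : ∀ a ∈ T, Disjoint (f a) (f s)
        · exfalso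
          have hmem : insert s T ∈ {T | T ⊆ S ∧ T.Pairwise fun a b => Disjoint (f a) (f b)} := by
            constructor
            · exact Set.insert_subset hs hTS
            · intro a ha b hb hab
              rcases ha with rfl | ha
              · rcases hb with rfl | hb
                · exact absurd rfl hab
                · exact (hdis b hb).symm
              · rcases hb with rfl | hb
                · exact hdis a ha
                · exact hTp ha hb hab
          have := hT.le_of_ge hmem (Set.subset_insert s T)
          exact hsT (this (Set.mem_insert s T))
        · push_neg at hdis
          obtain ⟨a, haT, hnd⟩ := hdis
          obtain ⟨x, hxa, hxs⟩ := Finset.not_disjoint_iff.mp hnd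
          refine Or.inr ?_
          exact Set.mem_biUnion (Set.mem_biUnion haT hxa) ⟨hs, hxs⟩
      exact hS (Set.Countable.mono hScov (hTc.union (hU.biUnion fun x _ => hx x)))

/-- If every finite subproduct `∏_{i ∈ s} P i` (ordered
coordinatewise) of a family of partial orders has the countable chain
condition, then so does the finite support product of the family. -/
theorem finSupportProd_ccc {I : Type*} (P : I → Type*) [∀ i, PartialOrder (P i)]
    (h : ∀ s : Finset I, CCC ((i : s) → P i)) :
    CCC (FinSupportProd I P) := by
  classical
  intro A hA
  by_contra hAc
  set d : FinSupportProd I P → Finset I := fun p => p.2.toFinset with hd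
  have hmemd : ∀ (p : FinSupportProd I P) (i : I), i ∈ d p ↔ p.1 i ≠ none := by
    intro p i; simp [hd, Set.Finite.mem_toFinset]
  have hex : ∃ n : ℕ, ¬ {p ∈ A | (d p).card = n}.Countable := by
    by_contra hn
    push_neg at hn
    have hAeq : A = ⋃ n, {p ∈ A | (d p).card = n} := by
      ext p; simp
    exact hAc (hAeq ▸ Set.countable_iUnion hn)
  obtain ⟨n, hn⟩ := hex
  obtain ⟨T, hTsub, hTunc, r, hr⟩ :=
    myDeltaSystem n {p ∈ A | (d p).card = n} d hn (fun a ha => le_of_eq ha.2)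
  have hTA : T ⊆ A := fun a ha => (hTsub ha).1
  have hTinf : T.Infinite := fun hfin => hTunc hfin.countable
  -- r is contained in every domain
  have hrsub : ∀ p ∈ T, r ⊆ d p := by
    intro p hp
    obtain ⟨q, hq, hqp⟩ := (hTinf.diff (Set.finite_singleton p)).nonempty
    have : d p ∩ d q = r := hr p hp q hq (fun e => (by simp [e] at hqp))
    rw [← this]
    exact Finset.inter_subset_left
  obtain ⟨p₀, hp₀⟩ := hTinf.nonempty
  have hne : ∀ i : r, Nonempty (P i.1) := by
    intro i
    have := (hmemd p₀ i.1).mp (hrsub p₀ hp₀ i.2)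
    cases hh : p₀.1 i.1 with
    | none => exact absurd hh this
    | some x => exact ⟨x⟩
  set g : FinSupportProd I P → ((i : r) → P i) :=
    fun p i => (p.1 i.1).getD (Classical.choice (hne i)) with hg
  have hgval : ∀ p ∈ T, ∀ i : r, p.1 i.1 = some (g p i) := by
    intro p hp i
    have := (hmemd p i.1).mp (hrsub p hp i.2)
    cases hh : p.1 i.1 with
    | none => exact absurd hh this
    | some x => simp [hg, hh]
  have hkey : ∀ p ∈ T, ∀ q ∈ T, p ≠ q → ∀ u : (i : r) → P i,
      u ≤ g p → u ≤ g q → Compat p q := by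
    intro p hp q hq hpq u hup huq
    have hrpq : d p ∩ d q = r := hr p hp q hq hpq
    set m : ∀ i, Option (P i) := fun i =>
      if hh : i ∈ r then some (u ⟨i, hh⟩) else if p.1 i = none then q.1 i else p.1 i
      with hm
    have hmfin : {i | m i ≠ none}.Finite := by
      apply Set.Finite.subset ((r.finite_toSet.union p.2).union q.2)
      intro i hi
      simp only [Set.mem_setOf_eq, hm] at hi
      by_cases hir : i ∈ r
      · exact Or.inl (Or.inl hir)
      · simp only [hir, dif_neg, not_false_iff] at hi
        by_cases hpn : p.1 i = none
        · simp only [hpn, if_pos] at hi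
          exact Or.inr hi
        · exact Or.inl (Or.inr hpn)
    refine ⟨⟨m, hmfin⟩, ?_, ?_⟩
    · intro i x hx
      by_cases hir : i ∈ r
      · refine ⟨u ⟨i, hir⟩, by simp [hm, hir], ?_⟩
        have h1 := hgval p hp ⟨i, hir⟩
        rw [hx] at h1
        have h2 : x = g p ⟨i, hir⟩ := by injection h1
        rw [h2]
        exact hup ⟨i, hir⟩
      · refine ⟨x, ?_, le_rfl⟩
        simp [hm, hir, hx]
    · intro i x hx
      by_cases hir : i ∈ r
      · refine ⟨u ⟨i, hir⟩, by simp [hm, hir], ?_⟩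
        have h1 := hgval q hq ⟨i, hir⟩
        rw [hx] at h1
        have h2 : x = g q ⟨i, hir⟩ := by injection h1
        rw [h2]
        exact huq ⟨i, hir⟩
      · have hpn : p.1 i = none := by
          by_contra hpn
          exact hir (hrpq ▸ Finset.mem_inter.mpr
            ⟨(hmemd p i).mpr hpn, (hmemd q i).mpr (by simp [hx])⟩)
        refine ⟨x, ?_, le_rfl⟩
        simp [hm, hir, hpn, hx]
  have hinj : Set.InjOn g T := by
    intro p hp q hq hgeq
    by_contra hpq
    exact hA (hTA hp) (hTA hq) hpq (hkey p hp q hq hpq (g p) le_rfl (le_of_eq hgeq))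
  have himg : (g '' T).Pairwise fun x y => ¬ Compat x y := by
    rintro _ ⟨p, hp, rfl⟩ _ ⟨q, hq, rfl⟩ hxy ⟨u, hup, huq⟩
    have hpq : p ≠ q := fun e => hxy (by rw [e])
    exact hA (hTA hp) (hTA hq) hpq (hkey p hp q hq hpq u hup huq)
  have hcnt : (g '' T).Countable := h r (g '' T) himg
  exact hTunc ((Set.mapsTo_image g T).countable_of_injOn hinj hcnt)


end
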